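/- Let $f(s)=e^{-s^{\lambda}}$ for $s>0$ with $\lambda>2$, and let $N\ge 1$. Then the radial self-similar profile equation $-s f'(s)=a(f(s))\big[f''(s)+\frac{N-1}{s}f'(s)\big]$ holds for all $s$ with $\lambda s^{\lambda}>\lambda+N-2$, where $a$ is defined on $(0,1)$ by $a(v)=\frac{|\ln v|^{2/\lambda}}{\lambda|\ln v|-(\lambda+N-2)}$. -/

import Mathlib

theorem stmt_7 (N : ℕ) (hN : 1 ≤ N) (lam : ℝ) (hlam : 2 < lam)
    (f : ℝ → ℝ) (hf : ∀ s, f s = Real.exp (-s ^ lam))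
    (a : ℝ → ℝ)
    (ha : ∀ v ∈ Set.Ioo (0 : ℝ) 1,
        a v = |Real.log v| ^ (2 / lam) / (lam * |Real.log v| - (lam + N - 2)))
    (s : ℝ) (hs : 0 < s) (hcond : lam + N - 2 < lam * s ^ lam) :
    -s * deriv f s = a (f s) * (deriv (deriv f) s + (N - 1) / s * deriv f s) := by
  have hlam0 : (0:ℝ) < lam := by linarith
  have hfE : f = fun x => Real.exp (-x ^ lam) := funext hf
  -- first derivative
  have hder : ∀ t : ℝ, 0 < t →
      HasDerivAt f (Real.exp (-t ^ lam) * (-(lam * t ^ (lam - 1)))) t := by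
    intro t ht
    rw [hfE]
    exact ((Real.hasDerivAt_rpow_const (x := t) (p := lam) (Or.inl ht.ne')).neg).exp
  have hderiv1 : ∀ t : ℝ, 0 < t →
      deriv f t = Real.exp (-t ^ lam) * (-(lam * t ^ (lam - 1))) := fun t ht =>
    (hder t ht).deriv
  -- second derivative
  have hG : HasDerivAt (fun t : ℝ => Real.exp (-t ^ lam) * (-(lam * t ^ (lam - 1))))
      (Real.exp (-s ^ lam) * (-(lam * s ^ (lam - 1))) * (-(lam * s ^ (lam - 1)))
        + Real.exp (-s ^ lam) * (-(lam * ((lam - 1) * s ^ (lam - 1 - 1))))) s := by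
    have h1 : HasDerivAt (fun x : ℝ => Real.exp (-x ^ lam))
        (Real.exp (-s ^ lam) * (-(lam * s ^ (lam - 1)))) s :=
      ((Real.hasDerivAt_rpow_const (x := s) (p := lam) (Or.inl hs.ne')).neg).exp
    have h2 : HasDerivAt (fun x : ℝ => -(lam * x ^ (lam - 1)))
        (-(lam * ((lam - 1) * s ^ (lam - 1 - 1)))) s :=
      ((Real.hasDerivAt_rpow_const (x := s) (p := lam - 1) (Or.inl hs.ne')).const_mul lam).neg
    exact h1.mul h2
  have hEventually : deriv f =ᶠ[nhds s]
      (fun t : ℝ => Real.exp (-t ^ lam) * (-(lam * t ^ (lam - 1)))) := by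
    filter_upwards [isOpen_Ioi.mem_nhds (show s ∈ Set.Ioi (0:ℝ) from hs)] with t ht
    exact hderiv1 t ht
  have hderiv2 : deriv (deriv f) s =
      Real.exp (-s ^ lam) * (-(lam * s ^ (lam - 1))) * (-(lam * s ^ (lam - 1)))
        + Real.exp (-s ^ lam) * (-(lam * ((lam - 1) * s ^ (lam - 1 - 1)))) := by
    rw [hEventually.deriv_eq]
    exact hG.deriv
  -- value of a at f s
  have hP : (0:ℝ) < s ^ lam := Real.rpow_pos_of_pos hs lam
  have hPbig : 0 < lam * s ^ lam - (lam + N - 2) := by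
    linarith
  have hfs : f s ∈ Set.Ioo (0:ℝ) 1 := by
    rw [hf]
    constructor
    · exact Real.exp_pos _
    · rw [Real.exp_lt_one_iff]
      linarith
  have hlog : Real.log (f s) = -s ^ lam := by rw [hf, Real.log_exp]
  have habs : |Real.log (f s)| = s ^ lam := by
    rw [hlog, abs_neg, abs_of_pos hP]
  have hpow2 : (s ^ lam) ^ (2 / lam) = s ^ (2:ℕ) := by
    rw [← Real.rpow_natCast s 2, ← Real.rpow_mul hs.le]
    congr 1
    field_simp
    norm_num
  have haval : a (f s) = s ^ (2:ℕ) / (lam * s ^ lam - (lam + N - 2)) := by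
    rw [ha (f s) hfs, habs, hpow2]
  -- rpow relations
  have h1 : s ^ (lam - 1) = s ^ lam / s := by
    rw [Real.rpow_sub hs, Real.rpow_one]
  have h2 : s ^ (lam - 1 - 1) = s ^ lam / s / s := by
    rw [Real.rpow_sub hs, Real.rpow_sub hs, Real.rpow_one]
  -- finish by algebra
  rw [hderiv1 s hs, hderiv2, haval, h1, h2]
  have hE : Real.exp (-s ^ lam) ≠ 0 := (Real.exp_pos _).ne'
  have hsne : s ≠ 0 := hs.ne'
  have hDne : lam * s ^ lam - (lam + N - 2) ≠ 0 := hPbig.ne'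
  field_simp
  rw [eq_div_iff (by rw [mul_comm]; exact hDne)]
  ring
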